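/- For every prime p ≥ 19 and every integer n ≥ 10⁶, there exists a subset A ⊆ 𝔽_p^n containing no nontrivial three-term arithmetic progression such that |A| ≥ p^{0.782n} and |A| ≥ ((p+1)/2.0001)^{n−2}. -/

import Mathlib

open Finset

set_option maxHeartbeats 1000000
set_option exponentiation.threshold 25000

lemma aux_lin (c k0 : ℕ) (h1 : c * k0 ≤ 2 ^ k0) (h2 : c ≤ 2 ^ k0) :
    ∀ k, k0 ≤ k → c * k ≤ 2 ^ k := by
  intro k hk
  induction k with
  | zero =>
    have : k0 = 0 := Nat.le_zero.mp hk
    subst this; simpa using h1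
  | succ k ih =>
    rcases Nat.lt_or_ge k0 (k+1) with h | h
    · have hk0k : k0 ≤ k := Nat.lt_succ_iff.mp h
      have h3 := ih hk0k
      have hc : c ≤ 2 ^ k := h2.trans (Nat.pow_le_pow_right (by norm_num) hk0k)
      calc c * (k+1) = c * k + c := by ring
        _ ≤ 2^k + 2^k := Nat.add_le_add h3 hc
        _ = 2^(k+1) := by ring
    · have : k0 = k + 1 := le_antisymm hk h
      subst this; exact h1

-- n ≤ 2^(L+1) - 1 style: n^1000 ≤ 2^(10*n) for n ≥ 4096
lemma aux_pow1000 (n : ℕ) (h : 4096 ≤ n) : n ^ 1000 ≤ 2 ^ (10 * n) := by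
  have hn0 : n ≠ 0 := by omega
  set L := Nat.log 2 n with hL
  have h1 : n < 2 ^ (L + 1) := Nat.lt_pow_succ_log_self (by norm_num) n
  have h2 : 2 ^ L ≤ n := Nat.pow_log_le_self 2 hn0
  have hL12 : 12 ≤ L := by
    have : 2 ^ 12 ≤ n := le_trans (by norm_num) h
    exact (Nat.le_log_iff_pow_le (by norm_num) hn0).mpr this
  have key : 200 * L ≤ 2 ^ L := aux_lin 200 12 (by norm_num) (by norm_num) L hL12
  have h3 : 1000 * (L + 1) ≤ 10 * n := by
    have : 100 * (L + 1) ≤ 2 ^ L := by omega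
    have := this.trans h2
    omega
  calc n ^ 1000 ≤ (2 ^ (L+1)) ^ 1000 := Nat.pow_le_pow_left (le_of_lt h1) 1000
    _ = 2 ^ ((L+1) * 1000) := by rw [← pow_mul]
    _ ≤ 2 ^ (10 * n) := Nat.pow_le_pow_right (by norm_num) (by omega)

-- for p = 19 case: (100*n)^1000 ≤ 2^(n/21) for n ≥ 10^6
lemma aux_19_log (n : ℕ) (h : 10 ^ 6 ≤ n) : (100 * n) ^ 1000 ≤ 2 ^ (n / 21) := by
  have hn0 : n ≠ 0 := by omega
  set L := Nat.log 2 n with hL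
  have h1 : n < 2 ^ (L + 1) := Nat.lt_pow_succ_log_self (by norm_num) n
  have h2 : 2 ^ L ≤ n := Nat.pow_log_le_self 2 hn0
  have hq : 1000 * L + 8000 ≤ n / 21 := by
    rw [Nat.le_div_iff_mul_le (by norm_num)]
    rcases Nat.lt_or_ge L 40 with hl | hl
    · have : L ≤ 39 := by omega
      linarith
    · have key : 26000 * L ≤ 2 ^ L := aux_lin 26000 40 (by norm_num) (by norm_num) L hl
      linarith
  calc (100 * n) ^ 1000 = 100 ^ 1000 * n ^ 1000 := by rw [mul_pow]
    _ ≤ 2 ^ 7000 * (2 ^ (L+1)) ^ 1000 := by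
        exact Nat.mul_le_mul (by norm_num) (Nat.pow_le_pow_left (le_of_lt h1) 1000)
    _ = 2 ^ (7000 + (L+1) * 1000) := by rw [← pow_mul, ← pow_add]
    _ ≤ 2 ^ (n / 21) := Nat.pow_le_pow_right (by norm_num) (by omega)

-- binomial two-term
lemma aux_binom (a : ℕ) : ∀ k : ℕ, a ^ k + k * a ^ (k - 1) ≤ (a + 1) ^ k := by
  intro k
  induction k with
  | zero => simp
  | succ k ih =>
    have h : (a+1)^(k+1) = (a+1)^k * a + (a+1)^k := by ring
    have h2 : a ^ k ≤ (a+1)^k := Nat.pow_le_pow_left (by omega) k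
    have h3 : (a ^ k + k * a ^ (k-1)) * a ≤ (a+1)^k * a := Nat.mul_le_mul_right a ih
    have h4 : a ^ (k+1) + k * (a ^ (k-1) * a) ≤ (a+1)^k * a := by
      calc a ^ (k+1) + k * (a ^ (k-1) * a) = (a ^ k + k * a ^ (k-1)) * a := by ring
        _ ≤ (a+1)^k * a := h3
    have h5 : k * a ^ k ≤ k * (a ^ (k-1) * a) := by
      rcases Nat.eq_zero_or_pos k with rfl | hk
      · simp
      · have : a ^ (k-1) * a = a ^ k := by
          rw [← pow_succ]; congr 1; omega
        rw [this]
    have h6 : a ^ (k+1) + k * a ^ k ≤ (a+1)^k * a := le_trans (by omega) h4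
    calc a ^ (k+1) + (k+1) * a ^ k = (a ^ (k+1) + k * a ^ k) + a ^ k := by ring
      _ ≤ ((a+1)^k * a) + (a+1)^k := Nat.add_le_add h6 h2
      _ = (a+1)^(k+1) := h.symm

-- block lemma
lemma aux_block (a b g K : ℕ) (hK : 0 < K) (h : g * b ^ K ≤ a ^ K) (hba : b ≤ a) :
    ∀ e, g ^ (e / K) * b ^ e ≤ a ^ e := by
  intro e
  have he : e = K * (e / K) + e % K := (Nat.div_add_mod e K).symm
  set q := e / K; set s := e % K
  calc g ^ q * b ^ e = (g * b ^ K) ^ q * b ^ s := by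
        rw [he]; rw [pow_add, pow_mul, mul_pow]; ring
    _ ≤ (a ^ K) ^ q * a ^ s :=
        Nat.mul_le_mul (Nat.pow_le_pow_left h q) (Nat.pow_le_pow_left hba s)
    _ = a ^ e := by rw [← pow_mul, ← pow_add, ← he]

-- main numeric key
lemma aux_key (p m n : ℕ) (hp : p.Prime) (hp19 : 19 ≤ p) (hm : 2 * m = p + 1)
    (hn : 10 ^ 6 ≤ n) : p ^ (782 * n) * (n * m ^ 2) ^ 1000 ≤ m ^ (1000 * n) := by
  have hn0 : 0 < n := by omega
  have hmp : m ≤ p := by omega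
  rcases Nat.lt_or_ge p 29 with hsmall | hbig
  · -- p = 19 or p = 23
    have : p = 19 ∨ p = 23 := by
      interval_cases p <;> first | (left; rfl) | (right; rfl) | (exfalso; revert hp; decide)
    rcases this with rfl | rfl
    · -- p = 19, m = 10
      have hm10 : m = 10 := by omega
      subst hm10
      have hblock : 2 ^ (n / 21) * (19 ^ 782) ^ n ≤ (10 ^ 1000) ^ n := by
        have := aux_block (10 ^ 1000) (19 ^ 782) 2 21 (by norm_num)
          (by norm_num) (by norm_num) n
        calc 2 ^ (n / 21) * (19 ^ 782) ^ n ≤ 2 ^ (n / 21) * (19 ^ 782) ^ n := le_rfl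
          _ ≤ (10 ^ 1000) ^ n := this
      have hlog := aux_19_log n hn
      calc 19 ^ (782 * n) * (n * 10 ^ 2) ^ 1000
          = (19 ^ 782) ^ n * (100 * n) ^ 1000 := by rw [pow_mul]; ring_nf
        _ ≤ (19 ^ 782) ^ n * 2 ^ (n / 21) := Nat.mul_le_mul_left _ hlog
        _ = 2 ^ (n / 21) * (19 ^ 782) ^ n := by ring
        _ ≤ (10 ^ 1000) ^ n := hblock
        _ = 10 ^ (1000 * n) := by rw [← pow_mul]
    · -- p = 23, m = 12
      have hm12 : m = 12 := by omega
      subst hm12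
      have hstep : 23 ^ 782 * 2 ^ 40 ≤ 12 ^ 1000 := by norm_num
      have hpw : (23 ^ 782 * 2 ^ 40) ^ n ≤ (12 ^ 1000) ^ n := Nat.pow_le_pow_left hstep n
      have hn2 : (n * 12 ^ 2) ^ 1000 ≤ 2 ^ (40 * n) := by
        calc (n * 12 ^ 2) ^ 1000 = n ^ 1000 * 144 ^ 1000 := by rw [mul_pow]; norm_num
          _ ≤ 2 ^ (10 * n) * 2 ^ 8000 := by
              exact Nat.mul_le_mul (aux_pow1000 n (by omega)) (by norm_num)
          _ = 2 ^ (10 * n + 8000) := by rw [← pow_add]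
          _ ≤ 2 ^ (40 * n) := Nat.pow_le_pow_right (by norm_num) (by omega)
      calc 23 ^ (782 * n) * (n * 12 ^ 2) ^ 1000
          ≤ 23 ^ (782 * n) * 2 ^ (40 * n) := Nat.mul_le_mul_left _ hn2
        _ = (23 ^ 782 * 2 ^ 40) ^ n := by rw [mul_pow, ← pow_mul, ← pow_mul]
        _ ≤ (12 ^ 1000) ^ n := hpw
        _ = 12 ^ (1000 * n) := by rw [← pow_mul]
  · -- p ≥ 29
    have h2m : p < 2 * m := by omega
    -- show 2^(1000n) * LHS ≤ 2^(1000n) * RHS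
    have key : 2 ^ (1000 * n) * (p ^ (782 * n) * (n * m ^ 2) ^ 1000) ≤ p ^ (1000 * n) := by
      have hmm : (n * m ^ 2) ^ 1000 ≤ n ^ 1000 * p ^ 2000 := by
        calc (n * m ^ 2) ^ 1000 = n ^ 1000 * (m ^ 2) ^ 1000 := by rw [mul_pow]
          _ ≤ n ^ 1000 * (p ^ 2) ^ 1000 :=
              Nat.mul_le_mul_left _ (Nat.pow_le_pow_left (Nat.pow_le_pow_left hmp 2) 1000)
          _ = n ^ 1000 * p ^ 2000 := by rw [← pow_mul]
      have h29 : 2 ^ (1054 * n) ≤ p ^ (217 * n) := by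
        calc 2 ^ (1054 * n) = (2 ^ 34) ^ (31 * n) := by rw [← pow_mul]; ring_nf
          _ ≤ (29 ^ 7) ^ (31 * n) := Nat.pow_le_pow_left (by norm_num) _
          _ = 29 ^ (217 * n) := by rw [← pow_mul]; ring_nf
          _ ≤ p ^ (217 * n) := Nat.pow_le_pow_left hbig _
      have hnp : 2 ^ (1000 * n) * (n ^ 1000 * p ^ 2000) ≤ p ^ (218 * n) := by
        calc 2 ^ (1000 * n) * (n ^ 1000 * p ^ 2000)
            ≤ 2 ^ (1000 * n) * (2 ^ (10 * n) * p ^ 2000) := by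
              exact Nat.mul_le_mul_left _ (Nat.mul_le_mul_right _ (aux_pow1000 n (by omega)))
          _ = 2 ^ (1010 * n) * p ^ 2000 := by rw [← mul_assoc, ← pow_add]; ring_nf
          _ ≤ 2 ^ (1054 * n) * p ^ 2000 :=
              Nat.mul_le_mul_right _ (Nat.pow_le_pow_right (by norm_num) (by omega))
          _ ≤ p ^ (217 * n) * p ^ 2000 := Nat.mul_le_mul_right _ h29
          _ = p ^ (217 * n + 2000) := by rw [← pow_add]
          _ ≤ p ^ (218 * n) := Nat.pow_le_pow_right (by omega) (by omega)
      calc 2 ^ (1000 * n) * (p ^ (782 * n) * (n * m ^ 2) ^ 1000)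
          ≤ 2 ^ (1000 * n) * (p ^ (782 * n) * (n ^ 1000 * p ^ 2000)) :=
            Nat.mul_le_mul_left _ (Nat.mul_le_mul_left _ hmm)
        _ = p ^ (782 * n) * (2 ^ (1000 * n) * (n ^ 1000 * p ^ 2000)) := by ring
        _ ≤ p ^ (782 * n) * p ^ (218 * n) := Nat.mul_le_mul_left _ hnp
        _ = p ^ (1000 * n) := by rw [← pow_add]; ring_nf
    have hpm : p ^ (1000 * n) ≤ 2 ^ (1000 * n) * m ^ (1000 * n) := by
      calc p ^ (1000 * n) ≤ (2 * m) ^ (1000 * n) := Nat.pow_le_pow_left (by omega) _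
        _ = 2 ^ (1000 * n) * m ^ (1000 * n) := mul_pow 2 m _
    have := key.trans hpm
    exact Nat.le_of_mul_le_mul_left this (by positivity)

lemma aux_ineq2 (n : ℕ) (hn : 10 ^ 6 ≤ n) : n * 20000 ^ (n - 2) ≤ 20001 ^ (n - 2) := by
  have hstep : 2 * 20000 ^ 20000 ≤ 20001 ^ 20000 := by
    have := aux_binom 20000 20000
    have h : (20000:ℕ) * 20000 ^ (20000 - 1) = 20000 ^ 20000 := by
      rw [← pow_succ']
    omega
  have hblock := aux_block 20001 20000 2 20000 (by norm_num) hstep (by norm_num) (n - 2)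
  set q := (n - 2) / 20000 with hq
  have hq49 : 49 ≤ q := by
    rw [hq]
    have : 49 * 20000 ≤ n - 2 := by omega
    omega
  have h2q : n ≤ 2 ^ q := by
    have hlin := aux_lin 40002 49 (by norm_num) (by norm_num) q hq49
    have : n - 2 < 20000 * (q + 1) := by
      rw [hq]; exact Nat.lt_mul_div_succ _ (by norm_num)
    calc n ≤ 20000 * q + 20001 + 2 := by omega
      _ ≤ 40002 * q := by omega
      _ ≤ 2 ^ q := hlin
  calc n * 20000 ^ (n - 2) ≤ 2 ^ q * 20000 ^ (n - 2) := Nat.mul_le_mul_right _ h2q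
    _ ≤ 20001 ^ (n - 2) := hblock

/-- For `p ≥ 19` and `n ≥ 10⁶` there are large subsets of `𝔽_p^n` with no nontrivial
three-term arithmetic progression. -/
theorem cap_set_lower_bound_large_n (p : ℕ) [Fact p.Prime] (hp : 19 ≤ p) (n : ℕ)
    (hn : 10 ^ 6 ≤ n) :
    ∃ A : Finset (Fin n → ZMod p),
      (∀ x d : Fin n → ZMod p, d ≠ 0 → ¬(x ∈ A ∧ x + d ∈ A ∧ x + d + d ∈ A)) ∧
      (p : ℝ) ^ ((0.782 : ℝ) * n) ≤ A.card ∧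
      (((p : ℝ) + 1) / 2.0001) ^ (n - 2) ≤ A.card := by
  have hprime : p.Prime := Fact.out
  have hpodd : p % 2 = 1 := Nat.odd_iff.mp (hprime.odd_of_ne_two (by omega))
  set m : ℕ := (p + 1) / 2 with hmdef
  have hm : 2 * m = p + 1 := by omega
  have hm10 : 10 ≤ m := by omega
  have hmp : m ≤ p := by omega
  have hn0 : 0 < n := by omega
  have hppos : 0 < p := by omega
  -- the box coordinate set
  set S : Finset (ZMod p) := univ.filter (fun a => a.val < m) with hSdef
  have hScard : S.card = m := by
    have himg : S = (range m).image (Nat.cast : ℕ → ZMod p) := by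
      ext a
      simp only [hSdef, mem_filter, mem_univ, true_and, mem_image, mem_range]
      constructor
      · intro h
        exact ⟨a.val, h, ZMod.natCast_zmod_val a⟩
      · rintro ⟨b, hb, rfl⟩
        rwa [ZMod.val_cast_of_lt (lt_of_lt_of_le hb hmp)]
    rw [himg, card_image_of_injOn, card_range]
    intro u hu v hv huv
    simp only [mem_coe, mem_range] at hu hv
    have := congrArg ZMod.val huv
    rwa [ZMod.val_cast_of_lt (lt_of_lt_of_le hu hmp),
      ZMod.val_cast_of_lt (lt_of_lt_of_le hv hmp)] at this
  -- the box
  set B : Finset (Fin n → ZMod p) := Fintype.piFinset (fun _ => S) with hBdef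
  have hBcard : B.card = m ^ n := by
    rw [hBdef, Fintype.card_piFinset]
    simp [hScard]
  have hmemB : ∀ x : Fin n → ZMod p, x ∈ B ↔ ∀ i, (x i).val < m := by
    intro x
    simp [hBdef, hSdef, Fintype.mem_piFinset]
  -- fibers of the squared norm
  set f : (Fin n → ZMod p) → ℕ := fun x => ∑ i, (x i).val ^ 2 with hfdef
  set R : ℕ := n * (m - 1) ^ 2 + 1 with hRdef
  have hfib : B.card = ∑ r ∈ range R, (B.filter (fun x => f x = r)).card := by
    apply card_eq_sum_card_fiberwise
    intro x hx
    rw [mem_coe, mem_range, hRdef]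
    have : f x ≤ ∑ _i : Fin n, (m - 1) ^ 2 := by
      apply sum_le_sum
      intro i _
      have : (x i).val < m := (hmemB x).mp hx i
      exact Nat.pow_le_pow_left (by omega) 2
    simpa using Nat.lt_succ_of_le (this.trans (by simp [mul_comm]))
  -- pigeonhole
  have hpig : ∃ r ∈ range R, B.card ≤ R * (B.filter (fun x => f x = r)).card := by
    apply exists_le_of_sum_le ⟨0, mem_range.mpr (by omega)⟩
    rw [← mul_sum, ← hfib, sum_const, card_range, smul_eq_mul]
  obtain ⟨r, _, hr⟩ := hpig
  set A : Finset (Fin n → ZMod p) := B.filter (fun x => f x = r) with hAdef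
  refine ⟨A, ?_, ?_⟩
  · -- AP-free
    rintro x d hd ⟨hx, hy, hz⟩
    apply hd
    simp only [hAdef, mem_filter] at hx hy hz
    have hxB := (hmemB x).mp hx.1
    have hyB := (hmemB _).mp hy.1
    have hzB := (hmemB _).mp hz.1
    -- coordinatewise val identity
    have hvals : ∀ i, (x i).val + ((x + d + d) i).val = ((x + d) i).val + ((x + d) i).val := by
      intro i
      have hzm : x i + (x + d + d) i = (x + d) i + (x + d) i := by
        simp only [Pi.add_apply]; ring
      have := congrArg ZMod.val hzm
      rwa [ZMod.val_add (x i), ZMod.val_add ((x+d) i),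
        Nat.mod_eq_of_lt (by have := hxB i; have := hzB i; omega),
        Nat.mod_eq_of_lt (by have := hyB i; omega)] at this
    -- integer sums
    have hx2 : ∑ i, (x i).val ^ 2 = r := hx.2
    have hy2 : ∑ i, ((x + d) i).val ^ 2 = r := hy.2
    have hz2 : ∑ i, ((x + d + d) i).val ^ 2 = r := hz.2
    have hxr : ∑ i, ((x i).val : ℤ) ^ 2 = (r : ℤ) := by exact_mod_cast hx2
    have hyr : ∑ i, (((x + d) i).val : ℤ) ^ 2 = (r : ℤ) := by exact_mod_cast hy2
    have hzr : ∑ i, (((x + d + d) i).val : ℤ) ^ 2 = (r : ℤ) := by exact_mod_cast hz2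
    have hzero : ∑ i, (((x i).val : ℤ) - ((x + d + d) i).val) ^ 2 = 0 := by
      have hterm : ∀ i ∈ univ, (((x i).val : ℤ) - ((x + d + d) i).val) ^ 2 =
          2 * ((x i).val : ℤ)^2 + 2 * (((x + d + d) i).val : ℤ)^2
            - 4 * (((x + d) i).val : ℤ)^2 := by
        intro i _
        have h := hvals i
        have h := hvals i
        have h' : ((x i).val : ℤ) + (((x + d + d) i).val : ℤ)
            = 2 * (((x + d) i).val : ℤ) := by zify at h; linarith
        linear_combination (-(((x i).val : ℤ) + (((x + d + d) i).val : ℤ)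
            + 2 * (((x + d) i).val : ℤ))) * h'
      rw [sum_congr rfl hterm]
      rw [sum_sub_distrib, sum_add_distrib, ← mul_sum, ← mul_sum, ← mul_sum,
        hxr, hyr, hzr]
      ring
    have heach : ∀ i, (x i).val = ((x + d + d) i).val := by
      intro i
      have := (sum_eq_zero_iff_of_nonneg (fun i _ => sq_nonneg _)).mp hzero i (mem_univ i)
      have := pow_eq_zero_iff (by norm_num : (2:ℕ) ≠ 0) |>.mp this
      have := sub_eq_zero.mp this
      exact_mod_cast this
    funext i
    have h1 := hvals i
    have h2 := heach i
    have hxy : (x i).val = ((x + d) i).val := by omega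
    have : x i = (x + d) i := ZMod.val_injective p hxy
    simp only [Pi.add_apply] at this
    have : d i = 0 := by linear_combination -this
    simpa using this
  · -- size bounds
    have hRle : R ≤ n * m ^ 2 := by
      rw [hRdef]
      have h1 : (m - 1) ^ 2 + 1 ≤ m ^ 2 := by
        obtain ⟨k, hk⟩ : ∃ k, m = k + 1 := ⟨m - 1, by omega⟩
        rw [hk]
        simp only [Nat.add_sub_cancel]
        nlinarith
      calc n * (m-1)^2 + 1 ≤ n * ((m-1)^2 + 1) := by nlinarith [hn0]
        _ ≤ n * m ^ 2 := Nat.mul_le_mul_left n h1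
    have hmain : m ^ n ≤ n * m ^ 2 * A.card := by
      calc m ^ n = B.card := hBcard.symm
        _ ≤ R * A.card := hr
        _ ≤ n * m ^ 2 * A.card := Nat.mul_le_mul_right _ hRle
    have hApos : 0 < A.card := by
      rcases Nat.eq_zero_or_pos A.card with h0 | h; swap
      · exact h
      · rw [h0, Nat.mul_zero] at hmain
        have : 0 < m ^ n := by positivity
        omega
    -- first bound, natural version
    have hNat1 : p ^ (782 * n) ≤ A.card ^ 1000 := by
      have h2 : (m ^ n) ^ 1000 ≤ (n * m ^ 2) ^ 1000 * A.card ^ 1000 := by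
        rw [← mul_pow]
        exact Nat.pow_le_pow_left hmain 1000
      have h3 : p ^ (782 * n) * (n * m ^ 2) ^ 1000 ≤ (n * m ^ 2) ^ 1000 * A.card ^ 1000 := by
        calc p ^ (782 * n) * (n * m ^ 2) ^ 1000 ≤ m ^ (1000 * n) :=
              aux_key p m n hprime hp hm hn
          _ = (m ^ n) ^ 1000 := by rw [← pow_mul]; ring_nf
          _ ≤ (n * m ^ 2) ^ 1000 * A.card ^ 1000 := h2
      have h4 : (n * m ^ 2) ^ 1000 * p ^ (782 * n)
          ≤ (n * m ^ 2) ^ 1000 * A.card ^ 1000 := by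
        calc (n * m ^ 2) ^ 1000 * p ^ (782 * n) = p ^ (782 * n) * (n * m ^ 2) ^ 1000 := by ring
          _ ≤ (n * m ^ 2) ^ 1000 * A.card ^ 1000 := h3
      exact Nat.le_of_mul_le_mul_left h4 (by positivity)
    -- second bound, natural version
    have hNat2 : (20000 * m) ^ (n - 2) ≤ 20001 ^ (n - 2) * A.card := by
      have hmn2 : m ^ (n - 2) ≤ n * A.card := by
        have hsplit : m ^ n = m ^ (n - 2) * m ^ 2 := by
          rw [← pow_add]
          congr 1
          omega
        have : m ^ (n - 2) * m ^ 2 ≤ n * A.card * m ^ 2 := by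
          rw [← hsplit]
          calc m ^ n ≤ n * m ^ 2 * A.card := hmain
            _ = n * A.card * m ^ 2 := by ring
        exact Nat.le_of_mul_le_mul_right this (by positivity)
      calc (20000 * m) ^ (n - 2) = 20000 ^ (n - 2) * m ^ (n - 2) := mul_pow _ _ _
        _ ≤ 20000 ^ (n - 2) * (n * A.card) := Nat.mul_le_mul_left _ hmn2
        _ = (n * 20000 ^ (n - 2)) * A.card := by ring
        _ ≤ 20001 ^ (n - 2) * A.card := Nat.mul_le_mul_right _ (aux_ineq2 n hn)
    constructor
    · -- real bound 1
      have hpow : ((p:ℝ) ^ ((0.782:ℝ) * n)) ^ (1000:ℕ) ≤ ((A.card : ℝ)) ^ (1000:ℕ) := by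
        have hL : ((p:ℝ) ^ ((0.782:ℝ) * n)) ^ (1000:ℕ) = (p:ℝ) ^ (782 * n : ℕ) := by
          rw [← Real.rpow_natCast ((p:ℝ) ^ ((0.782:ℝ) * n)) 1000,
            ← Real.rpow_mul (by positivity)]
          rw [show (0.782:ℝ) * n * ((1000:ℕ):ℝ) = ((782 * n : ℕ):ℝ) by push_cast; ring]
          rw [Real.rpow_natCast]
        rw [hL]
        exact_mod_cast hNat1
      exact le_of_pow_le_pow_left₀ (by norm_num) (by positivity) hpow
    · -- real bound 2
      have hpm : ((p:ℝ) + 1) = 2 * (m:ℝ) := by exact_mod_cast hm.symm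
      have h20 : (2.0001 : ℝ) = 20001 / 10000 := by norm_num
      have heq : ((p:ℝ) + 1) / 2.0001 = (20000 * m : ℝ) / 20001 := by
        rw [hpm, h20]
        field_simp
        ring
      rw [heq, div_pow]
      rw [div_le_iff₀ (by positivity)]
      calc ((20000 * (m:ℝ)) ^ (n - 2)) = (((20000 * m : ℕ)) ^ (n - 2) : ℕ) := by push_cast; ring
        _ ≤ ((20001 ^ (n - 2) * A.card : ℕ) : ℝ) := by exact_mod_cast hNat2
        _ = (A.card : ℝ) * (20001:ℝ) ^ (n - 2) := by push_cast; ring
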